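/- The distinct elements T^{𝒞}, one for each equivalence class 𝒞 of pairs of length-k partitions with entries in {1,...,n} under the relation (a,b) ∼ (c,d) iff ∃σ ∈ S_n with a = σc, b = σd, form a linearly independent set, and hence a basis of End_{S_n}(Sym^k(ℂⁿ)). -/
import Mathlib


/-- Model of the symmetric power `Sym^k(ℂⁿ)`: the free ℂ-module on the basis
indexed by length-`k` partitions with entries in `{1,…,n}`, i.e. size-`k`
multisets from an `n`-element set (basis vector `v_λ = Pi.single λ 1`). -/
abbrev SymV (n k : ℕ) : Type := Sym (Fin n) k → ℂ

/-- The diagonal action of a permutation matrix `σ ∈ S_n ⊆ GL_n(ℂ)` on `Sym^k(ℂⁿ)`: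
the linear map sending the basis vector `v_λ` to `v_{σλ}`, where `σλ` is obtained by
applying `σ` entrywise (and sorting). -/
noncomputable def permAct (n k : ℕ) (σ : Equiv.Perm (Fin n)) : Module.End ℂ (SymV n k) :=
  LinearMap.funLeft ℂ ℂ (Sym.map ⇑σ⁻¹)

/-- The centralizer algebra `End_{S_n}(Sym^k(ℂⁿ))`. -/
noncomputable def centAlg (n k : ℕ) : Subalgebra ℂ (Module.End ℂ (SymV n k)) :=
  Subalgebra.centralizer ℂ (Set.range (permAct n k))

/-- The matrix unit `E^ν_γ` sending the basis vector `v_ν` to `v_γ` and every other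
basis vector to `0`. -/
noncomputable def Eunit (n k : ℕ) (nu ga : Sym (Fin n) k) : Module.End ℂ (SymV n k) :=
  (LinearMap.proj nu).smulRight (Pi.single ga 1)

open scoped Classical in
/-- `T^λ_μ`, the sum of the matrix units `E^ν_γ` over all pairs `(ν, γ)` for which
there exists `ρ ∈ S_n` with `λ = ρν` and `μ = ργ`. -/
noncomputable def Tmap (n k : ℕ) (lam mu : Sym (Fin n) k) : Module.End ℂ (SymV n k) :=
  ∑ p : Sym (Fin n) k × Sym (Fin n) k,
    if ∃ ρ : Equiv.Perm (Fin n), lam = Sym.map ρ p.1 ∧ mu = Sym.map ρ p.2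
    then Eunit n k p.1 p.2 else 0

open scoped Classical

namespace TmapAux

variable {n k : ℕ}

/-- The orbit relation on pairs. -/
def R (p q : Sym (Fin n) k × Sym (Fin n) k) : Prop :=
  ∃ ρ : Equiv.Perm (Fin n), p.1 = Sym.map ⇑ρ q.1 ∧ p.2 = Sym.map ⇑ρ q.2

lemma map_inv_map (σ : Equiv.Perm (Fin n)) (a : Sym (Fin n) k) :
    Sym.map ⇑σ (Sym.map ⇑σ⁻¹ a) = a := by simp [Sym.map_map, Function.comp_def]

lemma map_map_inv (σ : Equiv.Perm (Fin n)) (a : Sym (Fin n) k) :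
    Sym.map ⇑σ⁻¹ (Sym.map ⇑σ a) = a := by simp [Sym.map_map, Function.comp_def]

lemma R_refl (p : Sym (Fin n) k × Sym (Fin n) k) : R p p :=
  ⟨1, by simp, by simp⟩

lemma R_symm {p q : Sym (Fin n) k × Sym (Fin n) k} (h : R p q) : R q p := by
  obtain ⟨ρ, h1, h2⟩ := h
  exact ⟨ρ⁻¹, by rw [h1, map_map_inv], by rw [h2, map_map_inv]⟩

lemma R_trans {p q r : Sym (Fin n) k × Sym (Fin n) k} (h : R p q) (h' : R q r) : R p r := by
  obtain ⟨ρ, h1, h2⟩ := h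
  obtain ⟨τ, g1, g2⟩ := h'
  exact ⟨ρ * τ, by simp [h1, g1, Sym.map_map, Function.comp_def],
    by simp [h2, g2, Sym.map_map, Function.comp_def]⟩

lemma Tmap_def (lam mu : Sym (Fin n) k) :
    Tmap n k lam mu = ∑ p : Sym (Fin n) k × Sym (Fin n) k,
      if R (lam, mu) p then Eunit n k p.1 p.2 else 0 := by
  unfold Tmap
  exact Finset.sum_congr rfl fun p _ => if_congr Iff.rfl rfl rfl

/-- entry of a matrix unit -/
lemma ent_Eunit (nu ga ν γ : Sym (Fin n) k) :
    Eunit n k nu ga (Pi.single ν 1) γ = if (ν, γ) = (nu, ga) then 1 else 0 := by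
  simp only [Eunit, LinearMap.smulRight_apply, LinearMap.proj_apply, Pi.smul_apply,
    smul_eq_mul, Pi.single_apply, Prod.mk.injEq]
  by_cases h1 : ν = nu <;> by_cases h2 : γ = ga <;>
    simp_all [eq_comm]

lemma ent_Tmap (lam mu ν γ : Sym (Fin n) k) :
    Tmap n k lam mu (Pi.single ν 1) γ = if R (lam, mu) (ν, γ) then 1 else 0 := by
  rw [Tmap_def]
  rw [LinearMap.sum_apply, Finset.sum_apply]
  rw [Finset.sum_eq_single ((ν, γ) : Sym (Fin n) k × Sym (Fin n) k)]
  · split <;> simp [ent_Eunit]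
  · intro p _ hp
    split
    · rw [ent_Eunit, if_neg fun h => hp h.symm]
    · simp
  · simp

/-- A linear endomorphism of `SymV` is determined by its matrix entries. -/
lemma ext_of_ent {f g : Module.End ℂ (SymV n k)}
    (h : ∀ ν γ, f (Pi.single ν 1) γ = g (Pi.single ν 1) γ) : f = g := by
  apply (Pi.basisFun ℂ (Sym (Fin n) k)).ext
  intro ν
  funext γ
  simpa using h ν γ

lemma Tmap_congr {p q : Sym (Fin n) k × Sym (Fin n) k} (h : R p q) :
    Tmap n k p.1 p.2 = Tmap n k q.1 q.2 := by
  apply ext_of_ent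
  intro ν γ
  rw [ent_Tmap, ent_Tmap]
  congr 1
  simp only [eq_iff_iff]
  exact ⟨fun h' => R_trans (R_symm h) h', fun h' => R_trans h h'⟩

lemma permAct_single (σ : Equiv.Perm (Fin n)) (ν : Sym (Fin n) k) :
    permAct n k σ (Pi.single ν 1) = Pi.single (Sym.map ⇑σ ν) 1 := by
  funext lam
  simp only [permAct, LinearMap.funLeft_apply, Pi.single_apply]
  congr 1
  simp only [eq_iff_iff]
  constructor
  · rintro rfl; rw [map_inv_map]
  · rintro rfl; rw [map_map_inv]

lemma ent_inv_of_mem {f : Module.End ℂ (SymV n k)} (hf : f ∈ centAlg n k)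
    (σ : Equiv.Perm (Fin n)) (ν γ : Sym (Fin n) k) :
    f (Pi.single (Sym.map ⇑σ ν) 1) (Sym.map ⇑σ γ) = f (Pi.single ν 1) γ := by
  have hf' : f ∈ Subalgebra.centralizer ℂ (Set.range (permAct n k)) := hf
  have h := (Subalgebra.mem_centralizer_iff ℂ).mp hf' (permAct n k σ) ⟨σ, rfl⟩
  have h2 := congrFun (congrArg (fun (g : Module.End ℂ (SymV n k)) =>
    g (Pi.single ν 1)) h) (Sym.map ⇑σ γ)
  simp only [Module.End.mul_apply] at h2
  rw [permAct_single] at h2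
  have : permAct n k σ (f (Pi.single ν 1)) (Sym.map ⇑σ γ) = f (Pi.single ν 1) γ := by
    simp [permAct, LinearMap.funLeft_apply, map_map_inv]
  rw [this] at h2
  exact h2.symm

lemma end_decomp (f : Module.End ℂ (SymV n k)) :
    f = ∑ p : Sym (Fin n) k × Sym (Fin n) k,
      f (Pi.single p.1 1) p.2 • Eunit n k p.1 p.2 := by
  apply ext_of_ent
  intro ν γ
  rw [LinearMap.sum_apply, Finset.sum_apply]
  rw [Finset.sum_eq_single ((ν, γ) : Sym (Fin n) k × Sym (Fin n) k)]
  · simp [ent_Eunit]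
  · intro p _ hp
    rw [LinearMap.smul_apply, Pi.smul_apply, smul_eq_mul, ent_Eunit,
      if_neg fun h => hp h.symm, mul_zero]
  · simp

end TmapAux

namespace TmapAux

variable {n k : ℕ}

/-- Each `Tmap` lies in the centralizer. -/
lemma Tmap_mem_centAlg (lam mu : Sym (Fin n) k) : Tmap n k lam mu ∈ centAlg n k := by
  show Tmap n k lam mu ∈ Subalgebra.centralizer ℂ (Set.range (permAct n k))
  rw [Subalgebra.mem_centralizer_iff]
  rintro - ⟨σ, rfl⟩
  apply ext_of_ent
  intro ν γ
  have hL : (permAct n k σ * Tmap n k lam mu) (Pi.single ν 1) γ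
      = Tmap n k lam mu (Pi.single ν 1) (Sym.map ⇑σ⁻¹ γ) := by
    simp [Module.End.mul_apply, permAct, LinearMap.funLeft_apply]
  have hR : (Tmap n k lam mu * permAct n k σ) (Pi.single ν 1) γ
      = Tmap n k lam mu (Pi.single (Sym.map ⇑σ ν) 1) γ := by
    rw [Module.End.mul_apply, permAct_single]
  rw [hL, hR, ent_Tmap, ent_Tmap]
  apply if_congr _ rfl rfl
  have key : R ((Sym.map ⇑σ ν, γ) : Sym (Fin n) k × Sym (Fin n) k) (ν, Sym.map ⇑σ⁻¹ γ) :=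
    ⟨σ, rfl, (map_inv_map σ γ).symm⟩
  exact ⟨fun h => R_trans h (R_symm key), fun h => R_trans h key⟩

noncomputable def Ncard (q : Sym (Fin n) k × Sym (Fin n) k) : ℕ :=
  (Finset.univ.filter (fun r : Sym (Fin n) k × Sym (Fin n) k => R r q)).card

lemma Ncard_pos (q : Sym (Fin n) k × Sym (Fin n) k) : 0 < Ncard q :=
  Finset.card_pos.mpr ⟨q, by simp [R_refl]⟩

lemma Ncard_congr {p q : Sym (Fin n) k × Sym (Fin n) k} (h : R p q) : Ncard p = Ncard q := by
  unfold Ncard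
  congr 1
  apply Finset.filter_congr
  intro r _
  exact ⟨fun h' => R_trans h' h, fun h' => R_trans h' (R_symm h)⟩

/-- Every element of the centralizer is a linear combination of the `Tmap`s. -/
lemma centAlg_eq_comb {f : Module.End ℂ (SymV n k)} (hf : f ∈ centAlg n k) :
    f = ∑ q : Sym (Fin n) k × Sym (Fin n) k,
      (f (Pi.single q.1 1) q.2 / (Ncard q : ℂ)) • Tmap n k q.1 q.2 := by
  apply ext_of_ent
  intro ν γ
  rw [LinearMap.sum_apply, Finset.sum_apply]
  have hterm : ∀ q : Sym (Fin n) k × Sym (Fin n) k,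
      ((f (Pi.single q.1 1) q.2 / (Ncard q : ℂ)) • Tmap n k q.1 q.2) (Pi.single ν 1) γ
      = if R q (ν, γ) then f (Pi.single ν 1) γ / (Ncard (ν, γ) : ℂ) else 0 := by
    intro q
    rw [LinearMap.smul_apply, Pi.smul_apply, smul_eq_mul, ent_Tmap]
    by_cases h : R (q.1, q.2) (ν, γ)
    · rw [if_pos h, if_pos h, mul_one]
      obtain ⟨σ, h1, h2⟩ := h
      have he : f (Pi.single q.1 1) q.2 = f (Pi.single ν 1) γ := by
        rw [show q.1 = Sym.map ⇑σ ν from h1, show q.2 = Sym.map ⇑σ γ from h2]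
        exact ent_inv_of_mem hf σ ν γ
      rw [he, Ncard_congr (p := q) (q := (ν, γ)) ⟨σ, h1, h2⟩]
    · rw [if_neg h, if_neg h, mul_zero]
  rw [Finset.sum_congr rfl fun q _ => hterm q, Finset.sum_ite, Finset.sum_const_zero,
    add_zero, Finset.sum_const, nsmul_eq_mul]
  have hcard : ((Finset.univ.filter
      (fun x : Sym (Fin n) k × Sym (Fin n) k => R x (ν, γ))).card : ℂ) = (Ncard (ν, γ) : ℂ) := rfl
  have hne : (Ncard (ν, γ) : ℂ) ≠ 0 := Nat.cast_ne_zero.mpr (Ncard_pos (ν, γ)).ne'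
  rw [hcard, mul_comm, div_mul_cancel₀ _ hne]


end TmapAux


open TmapAux in
/-- The distinct elements `T^𝒞` (one for each equivalence class of pairs of
partitions, i.e. the distinct values of `(λ,μ) ↦ T^λ_μ`) are linearly independent,
and hence form a basis of the centralizer algebra `End_{S_n}(Sym^k(ℂⁿ))`. -/
theorem Tmap_linearIndependent_and_spans (n k : ℕ) :
    LinearIndependent ℂ
      (fun x : Set.range (fun p : Sym (Fin n) k × Sym (Fin n) k => Tmap n k p.1 p.2) =>
        (x : Module.End ℂ (SymV n k))) ∧
    (↑(Submodule.span ℂ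
        (Set.range fun p : Sym (Fin n) k × Sym (Fin n) k => Tmap n k p.1 p.2))
      : Set (Module.End ℂ (SymV n k))) = ↑(centAlg n k) := by
  constructor
  · rw [linearIndependent_iff']
    intro s g hsum i hi
    obtain ⟨p, hp⟩ := i.2
    have h2 := congrFun (congrArg (fun (f : Module.End ℂ (SymV n k)) =>
      f (Pi.single p.1 1)) hsum) p.2
    simp only [LinearMap.coe_sum, Finset.sum_apply, LinearMap.smul_apply, Pi.smul_apply,
      smul_eq_mul, LinearMap.zero_apply, Pi.zero_apply] at h2
    have hval : ∀ j ∈ s, g j * ((j : Module.End ℂ (SymV n k)) (Pi.single p.1 1) p.2)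
        = if j = i then g j else 0 := by
      intro j _
      obtain ⟨q, hq⟩ := j.2
      by_cases hji : j = i
      · subst hji
        rw [← hp]
        rw [ent_Tmap, if_pos (R_refl p), mul_one, if_pos rfl]
      · rw [← hq, ent_Tmap, if_neg, mul_zero, if_neg hji]
        intro hR
        exact hji (Subtype.ext (by rw [← hq, ← hp]; exact Tmap_congr hR))
    rw [Finset.sum_congr rfl hval, Finset.sum_ite_eq' s i g, if_pos hi] at h2
    exact h2
  · ext f
    constructor
    · intro hf
      exact Submodule.span_le
        (p := Subalgebra.toSubmodule (centAlg n k)) |>.mpr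
        (by rintro - ⟨p, rfl⟩; exact Tmap_mem_centAlg p.1 p.2) hf
    · intro hf
      show f ∈ Submodule.span ℂ _
      rw [centAlg_eq_comb (f := f) hf]
      exact Submodule.sum_mem _ fun q _ =>
        Submodule.smul_mem _ _ (Submodule.subset_span ⟨q, rfl⟩)
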